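/- Let A and B be metric spaces each of diameter at most 1, let θ : A → B, let c ≥ 1 and let 0 < α ≤ 1 ≤ β. Assume that for all x, y ∈ A: dist(θx, θy) ≤ c·dist(x,y)^α and dist(x,y)^β ≤ c·dist(θx, θy). Then for every R ≥ 0 and all x ≠ y in A such that dist(x,y) ≥ e^{−R} or dist(θx,θy) ≥ e^{−R}, the distance dist(θx,θy) is positive and |log(dist(θx,θy)/dist(x,y))| ≤ (log c + max(1−α, β−1)·R)/α. -/
import Mathlib

open Metric Real

theorem stmt_14
    {A B : Type*} [MetricSpace A] [MetricSpace B]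
    (hA : Metric.diam (Set.univ : Set A) ≤ 1)
    (hB : Metric.diam (Set.univ : Set B) ≤ 1)
    (θ : A → B) (c α β : ℝ) (hc : 1 ≤ c)
    (hα0 : 0 < α) (hα1 : α ≤ 1) (hβ : 1 ≤ β)
    (hupper : ∀ x y : A, dist (θ x) (θ y) ≤ c * dist x y ^ α)
    (hlower : ∀ x y : A, dist x y ^ β ≤ c * dist (θ x) (θ y)) :
    ∀ R : ℝ, 0 ≤ R → ∀ x y : A, x ≠ y →
      (Real.exp (-R) ≤ dist x y ∨ Real.exp (-R) ≤ dist (θ x) (θ y)) →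
      0 < dist (θ x) (θ y) ∧
        |Real.log (dist (θ x) (θ y) / dist x y)| ≤
          (Real.log c + max (1 - α) (β - 1) * R) / α := by
  intro R hR x y hxy hcase
  have hd : 0 < dist x y := dist_pos.2 hxy
  have hc0 : 0 < c := lt_of_lt_of_le one_pos hc
  have hD : 0 < dist (θ x) (θ y) := by
    have h := hlower x y
    have h2 : 0 < dist x y ^ β := Real.rpow_pos_of_pos hd β
    nlinarith
  refine ⟨hD, ?_⟩
  have hlogc : 0 ≤ Real.log c := Real.log_nonneg hc
  set Ld := Real.log (dist x y) with hLd
  set LD := Real.log (dist (θ x) (θ y)) with hLD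
  have h1 : LD ≤ Real.log c + α * Ld := by
    have h := Real.log_le_log hD (hupper x y)
    rwa [Real.log_mul (ne_of_gt hc0) (ne_of_gt (Real.rpow_pos_of_pos hd α)),
      Real.log_rpow hd] at h
  have h2 : β * Ld ≤ Real.log c + LD := by
    have h := Real.log_le_log (Real.rpow_pos_of_pos hd β) (hlower x y)
    rwa [Real.log_mul (ne_of_gt hc0) (ne_of_gt hD), Real.log_rpow hd] at h
  set M := max (1 - α) (β - 1) with hM
  have hM1 : 1 - α ≤ M := le_max_left _ _
  have hM2 : β - 1 ≤ M := le_max_right _ _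
  have hM0 : 0 ≤ M := le_trans (by linarith) hM2
  have hN : 0 ≤ Real.log c + M * R := by positivity
  have step : ∀ t γ : ℝ, α ≤ γ → t * γ ≤ Real.log c + M * R →
      t * α ≤ Real.log c + M * R := by
    intro t γ hγ ht
    rcases le_or_gt t 0 with h' | h'
    · nlinarith
    · nlinarith
  rw [Real.log_div (ne_of_gt hD) (ne_of_gt hd), abs_le]
  constructor
  · rw [neg_le, le_div_iff₀ hα0]
    rcases hcase with h | h
    · have hld : -R ≤ Ld := by
        rw [← Real.log_exp (-R)]
        exact Real.log_le_log (Real.exp_pos _) h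
      refine step _ 1 hα1 ?_
      nlinarith [mul_nonneg (sub_nonneg.2 hβ) (by linarith : (0:ℝ) ≤ Ld + R),
        mul_nonneg (by linarith : (0:ℝ) ≤ M - (β - 1)) hR]
    · have hld : -R ≤ LD := by
        rw [← Real.log_exp (-R)]
        exact Real.log_le_log (Real.exp_pos _) h
      refine step _ β (hα1.trans hβ) ?_
      nlinarith [mul_nonneg (by linarith : (0:ℝ) ≤ β - 1) (by linarith : (0:ℝ) ≤ LD + R),
        mul_nonneg (by linarith : (0:ℝ) ≤ M - (β - 1)) hR]
  · rw [le_div_iff₀ hα0]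
    rcases hcase with h | h
    · have hld : -R ≤ Ld := by
        rw [← Real.log_exp (-R)]
        exact Real.log_le_log (Real.exp_pos _) h
      refine step _ 1 hα1 ?_
      nlinarith [mul_nonneg (sub_nonneg.2 hα1) (by linarith : (0:ℝ) ≤ Ld + R),
        mul_nonneg (by linarith : (0:ℝ) ≤ M - (1 - α)) hR]
    · have hld : -R ≤ LD := by
        rw [← Real.log_exp (-R)]
        exact Real.log_le_log (Real.exp_pos _) h
      nlinarith [mul_nonneg (sub_nonneg.2 hα1) (by linarith : (0:ℝ) ≤ LD + R),
        mul_nonneg (by linarith : (0:ℝ) ≤ M - (1 - α)) hR]
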